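/- Let x = (x_n) ∈ ℓ∞ be nonzero and let S_x = {(x_n + ‖x‖)·e_n : n ∈ ℕ} ∪ {(x_n − ‖x‖)·e_n : n ∈ ℕ}, a countable subset of c0. Then S_x has diameter 2‖x‖, and x is the unique element y ∈ ℓ∞ satisfying ‖s − y‖ ≤ ‖x‖ for every s ∈ S_x. -/

import Mathlib

open Filter
set_option synthInstance.maxHeartbeats 1000000

/-- `c₀`: the subspace of `ℓ∞` of real sequences converging to `0`. -/
noncomputable def c0 : Submodule ℝ (lp (fun _ : ℕ => ℝ) ⊤) where
  carrier := {f | Tendsto (⇑f) atTop (nhds 0)}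
  add_mem' := by
    intro f g hf hg
    show Tendsto (⇑(f + g)) atTop (nhds 0)
    have hadd : ⇑(f + g) = ⇑f + ⇑g := lp.coeFn_add f g
    rw [hadd]
    have h := hf.add hg
    rw [add_zero] at h
    exact h
  zero_mem' := by
    have h0 : ⇑(0 : lp (fun _ : ℕ => ℝ) ⊤) = (0 : ∀ _ : ℕ, ℝ) := lp.coeFn_zero _ _
    show Tendsto _ atTop (nhds 0)
    rw [h0]
    exact tendsto_const_nhds
  smul_mem' := by
    intro c f hf
    show Tendsto (⇑(c • f)) atTop (nhds 0)
    have hsmul : ⇑(c • f) = c • ⇑f := lp.coeFn_smul c f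
    rw [hsmul]
    have h := hf.const_smul c
    rw [smul_zero] at h
    exact h


private lemma coord_smul_single (c : ℝ) (n m : ℕ) :
    (c • lp.single ⊤ n (1:ℝ) : lp (fun _ : ℕ => ℝ) ⊤) m = if m = n then c else 0 := by
  rw [lp.coeFn_smul]
  simp [lp.single_apply, Pi.single_apply]

private lemma norm_smul_single' (c : ℝ) (n : ℕ) :
    ‖(c • lp.single ⊤ n (1:ℝ) : lp (fun _ : ℕ => ℝ) ⊤)‖ = |c| := by
  refine le_antisymm (lp.norm_le_of_forall_le (abs_nonneg c) fun m => ?_) ?_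
  · rw [coord_smul_single]
    split <;> simp [Real.norm_eq_abs]
  · have := lp.norm_apply_le_norm (ENNReal.top_ne_zero)
      (c • lp.single ⊤ n (1:ℝ) : lp (fun _ : ℕ => ℝ) ⊤) n
    rwa [coord_smul_single, if_pos rfl, Real.norm_eq_abs] at this

private lemma dist_single_le (x : lp (fun _ : ℕ => ℝ) ⊤) (c : ℝ) (n : ℕ)
    (hc : |c - x n| ≤ ‖x‖) :
    ‖(c • lp.single ⊤ n (1:ℝ) : lp (fun _ : ℕ => ℝ) ⊤) - x‖ ≤ ‖x‖ := by
  refine lp.norm_le_of_forall_le (norm_nonneg x) fun m => ?_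
  have hsub : ((c • lp.single ⊤ n (1:ℝ) : lp (fun _ : ℕ => ℝ) ⊤) - x) m
      = (if m = n then c else 0) - x m := by
    rw [lp.coeFn_sub, Pi.sub_apply, coord_smul_single]
  rw [hsub]
  by_cases h : m = n
  · subst h; simpa [Real.norm_eq_abs] using hc
  · rw [if_neg h]
    have := lp.norm_apply_le_norm (ENNReal.top_ne_zero) x m
    simpa [Real.norm_eq_abs] using this

theorem unique_center_of_Sx
    (x : lp (fun _ : ℕ => ℝ) ⊤) (hx : x ≠ 0)
    (S : Set (lp (fun _ : ℕ => ℝ) ⊤))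
    (hS : S = (Set.range fun n : ℕ => (x n + ‖x‖) • lp.single ⊤ n (1 : ℝ)) ∪
              (Set.range fun n : ℕ => (x n - ‖x‖) • lp.single ⊤ n (1 : ℝ))) :
    S.Countable ∧ (∀ s ∈ S, s ∈ c0) ∧ Metric.diam S = 2 * ‖x‖ ∧
      (∀ s ∈ S, ‖s - x‖ ≤ ‖x‖) ∧
      (∀ y : lp (fun _ : ℕ => ℝ) ⊤, (∀ s ∈ S, ‖s - y‖ ≤ ‖x‖) → y = x) := by
  -- part 4 first
  have h4 : ∀ s ∈ S, ‖s - x‖ ≤ ‖x‖ := by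
    rw [hS]
    rintro s (⟨n, rfl⟩ | ⟨n, rfl⟩)
    · refine dist_single_le x _ n ?_
      have h : (x n + ‖x‖) - x n = ‖x‖ := by ring
      rw [h, abs_of_nonneg (norm_nonneg x)]
    · refine dist_single_le x _ n ?_
      have h : (x n - ‖x‖) - x n = -‖x‖ := by ring
      rw [h, abs_neg, abs_of_nonneg (norm_nonneg x)]
  -- countable
  have h1 : S.Countable := by
    rw [hS]
    exact (Set.countable_range _).union (Set.countable_range _)
  -- membership in c0
  have h2 : ∀ s ∈ S, s ∈ c0 := by
    rw [hS]
    have key : ∀ c : ℝ, ∀ n : ℕ,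
        (c • lp.single ⊤ n (1:ℝ) : lp (fun _ : ℕ => ℝ) ⊤) ∈ c0 := by
      intro c n
      show Tendsto _ atTop (nhds 0)
      have hfun : ⇑(c • lp.single ⊤ n (1:ℝ) : lp (fun _ : ℕ => ℝ) ⊤)
          = fun m => if m = n then c else 0 := funext (coord_smul_single c n)
      rw [hfun]
      refine tendsto_const_nhds.congr' ?_
      filter_upwards [eventually_ge_atTop (n+1)] with m hm
      rw [if_neg (by omega)]
    rintro s (⟨n, rfl⟩ | ⟨n, rfl⟩) <;> exact key _ n
  -- boundedness
  have hsub : S ⊆ Metric.closedBall x ‖x‖ := fun s hs => by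
    rw [Metric.mem_closedBall, dist_eq_norm]; exact h4 s hs
  have hbdd : Bornology.IsBounded S := Metric.isBounded_closedBall.subset hsub
  -- diameter
  have h3 : Metric.diam S = 2 * ‖x‖ := by
    refine le_antisymm ?_ ?_
    · refine Metric.diam_le_of_forall_dist_le (by positivity) fun s hs t ht => ?_
      calc dist s t ≤ dist s x + dist x t := dist_triangle s x t
        _ ≤ ‖x‖ + ‖x‖ := by
            rw [dist_eq_norm, dist_comm, dist_eq_norm]
            exact add_le_add (h4 s hs) (h4 t ht)
        _ = 2 * ‖x‖ := by ring
    · have hsmem : ((x 0 + ‖x‖) • lp.single ⊤ 0 (1:ℝ) : lp (fun _ : ℕ => ℝ) ⊤) ∈ S := by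
        rw [hS]; exact Or.inl ⟨0, rfl⟩
      have htmem : ((x 0 - ‖x‖) • lp.single ⊤ 0 (1:ℝ) : lp (fun _ : ℕ => ℝ) ⊤) ∈ S := by
        rw [hS]; exact Or.inr ⟨0, rfl⟩
      have hdist : dist ((x 0 + ‖x‖) • lp.single ⊤ 0 (1:ℝ) : lp (fun _ : ℕ => ℝ) ⊤)
          ((x 0 - ‖x‖) • lp.single ⊤ 0 (1:ℝ)) = 2 * ‖x‖ := by
        rw [dist_eq_norm, ← sub_smul]
        have : (x 0 + ‖x‖) - (x 0 - ‖x‖) = 2 * ‖x‖ := by ring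
        rw [this, norm_smul_single', abs_of_nonneg (by positivity)]
      calc 2 * ‖x‖ = _ := hdist.symm
        _ ≤ Metric.diam S := Metric.dist_le_diam_of_mem hbdd hsmem htmem
  refine ⟨h1, h2, h3, h4, ?_⟩
  -- uniqueness
  intro y hy
  refine lp.ext (funext fun n => ?_)
  have hp : ∀ c : ℝ, (c • lp.single ⊤ n (1:ℝ) : lp (fun _ : ℕ => ℝ) ⊤) ∈ S →
      |c - y n| ≤ ‖x‖ := by
    intro c hc
    have h := hy _ hc
    have := lp.norm_apply_le_norm (ENNReal.top_ne_zero)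
      ((c • lp.single ⊤ n (1:ℝ) : lp (fun _ : ℕ => ℝ) ⊤) - y) n
    rw [lp.coeFn_sub, Pi.sub_apply, coord_smul_single, if_pos rfl, Real.norm_eq_abs] at this
    exact this.trans h
  have hA : |(x n + ‖x‖) - y n| ≤ ‖x‖ := hp _ (by rw [hS]; exact Or.inl ⟨n, rfl⟩)
  have hB : |(x n - ‖x‖) - y n| ≤ ‖x‖ := hp _ (by rw [hS]; exact Or.inr ⟨n, rfl⟩)
  rw [abs_le] at hA hB
  have : y n = x n := by linarith [hA.1, hA.2, hB.1, hB.2]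
  exact this
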